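/- In the depth-first construction of a tree from particle positions and weights, for each vertex v let e(v) be the time at which the examination of v finishes, and let N(v) be the set consisting of all children of v together with all later siblings of the ancestors of v (later in the order of children). Then F^exc(e(v)) = Σ_{w ∈ N(v)} p_w for every vertex v. -/

import Mathlib

open Set Finset

open scoped Classical in
/-- Depth-first construction: `w 0, w 1, …` is the depth-first order (descendants of
each vertex form a consecutive block, hypothesis `hdfs`), the parent of `w k` is the
vertex `w j` whose examination interval `(∑_{l<j} p (w l), ∑_{l≤j} p (w l))` contains
the shifted position of `w k` (hypothesis `hpar`), and the examination of `w k`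
finishes at time `e (w k) = ∑_{l ≤ k} p (w l)`.  Then `Fexc (e (w k))` equals the
total weight of `N (w k)`, the set of children of `w k` together with the later
siblings of its ancestors, i.e. of the vertices `w m` with `m > k` whose parent is an
ancestor of `w k` or `w k` itself and which are not themselves ancestors of `w k`. -/
theorem stmt9 (n : ℕ) (hn : 0 < n) (x p : Fin n → ℝ)
    (hx : ∀ i, x i ∈ Ico (0:ℝ) 1) (hxinj : Function.Injective x)
    (hp : ∀ i, 0 < p i) (hsum : ∑ i, p i = 1)
    (w : Fin n → Fin n) (hw : Function.Bijective w)
    (par : Fin n → Fin n)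
    (hroot : par (w ⟨0, hn⟩) = w ⟨0, hn⟩)
    (hpar : ∀ k : Fin n, 0 < (k : ℕ) → ∃ j : Fin n, par (w k) = w j ∧
      Int.fract (x (w k) - x (w ⟨0, hn⟩)) ∈
        Ioo (∑ l ∈ Finset.Iio j, p (w l)) (∑ l ∈ Finset.Iic j, p (w l)))
    (hdfs : ∀ j k : Fin n, (∃ r : ℕ, par^[r] (w k) = w j) ↔
      (j ≤ k ∧ (k : ℕ) < (j : ℕ) +
        (Finset.univ.filter fun m : Fin n => ∃ r : ℕ, par^[r] (w m) = w j).card))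
    (Fexc : ℝ → ℝ)
    (hFexc : ∀ u : ℝ, Fexc u =
      (∑ i, if Int.fract (x i - x (w ⟨0, hn⟩)) ≤ u then p i else 0) - u) :
    ∀ k : Fin n,
      Fexc (∑ l ∈ Finset.Iic k, p (w l)) =
        ∑ m ∈ Finset.univ.filter (fun m : Fin n => k < m ∧
          (∃ r : ℕ, par^[r] (w k) = par (w m)) ∧
          ¬ ∃ r : ℕ, par^[r] (w k) = w m), p (w m) := by
  intro k
  set z : Fin n := ⟨0, hn⟩ with hz
  set y : Fin n → ℝ := fun m => Int.fract (x (w m) - x (w z)) with hy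
  set S : Fin n → ℝ := fun j => ∑ l ∈ Finset.Iic j, p (w l) with hS
  have hSmono : ∀ {a b : Fin n}, a ≤ b → S a ≤ S b := by
    intro a b hab
    apply Finset.sum_le_sum_of_subset_of_nonneg (Finset.Iic_subset_Iic.mpr hab)
    intros; exact (hp _).le
  have hSnn : ∀ a, (0:ℝ) ≤ S a := fun a => Finset.sum_nonneg fun _ _ => (hp _).le
  have hSIio : ∀ {a b : Fin n}, a < b → S a ≤ ∑ l ∈ Finset.Iio b, p (w l) := by
    intro a b hab
    apply Finset.sum_le_sum_of_subset_of_nonneg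
    · intro l hl
      simp only [Finset.mem_Iic, Finset.mem_Iio] at *
      exact lt_of_le_of_lt hl hab
    · intros; exact (hp _).le
  -- m ≤ k implies y m ≤ S k
  have hle : ∀ m : Fin n, m ≤ k → y m ≤ S k := by
    intro m hmk
    rcases Nat.eq_zero_or_pos (m : ℕ) with h0 | h0
    · have : m = z := Fin.ext h0
      rw [this]
      simp only [hy, sub_self, Int.fract_zero]
      exact hSnn k
    · obtain ⟨j, hj1, hj2⟩ := hpar m h0
      have hjm : j ≤ m := by
        have : ∃ r : ℕ, par^[r] (w m) = w j := ⟨1, by simpa using hj1⟩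
        exact ((hdfs j m).mp this).1
      exact le_of_lt (lt_of_lt_of_le hj2.2 (hSmono (le_trans hjm hmk)))
  -- for k < m, m is not an ancestor of k
  have hnotanc : ∀ m : Fin n, k < m → ¬ ∃ r : ℕ, par^[r] (w k) = w m := by
    intro m hkm ⟨r, hr⟩
    exact absurd ((hdfs m k).mp ⟨r, hr⟩).1 (not_le.mpr hkm)
  -- key equivalence
  have hkey : ∀ m : Fin n, k < m →
      (y m ≤ S k ↔ ∃ r : ℕ, par^[r] (w k) = par (w m)) := by
    intro m hkm
    have h0 : 0 < (m : ℕ) := lt_of_le_of_lt (Nat.zero_le _) hkm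
    obtain ⟨j, hj1, hj2⟩ := hpar m h0
    rw [hj1]
    constructor
    · intro hym
      have hjk : j ≤ k := by
        by_contra h
        push_neg at h
        have h1 : S k ≤ ∑ l ∈ Finset.Iio j, p (w l) := hSIio h
        have h2 : ∑ l ∈ Finset.Iio j, p (w l) < y m := hj2.1
        linarith
      have hanc : ∃ r : ℕ, par^[r] (w m) = w j := ⟨1, by simpa using hj1⟩
      have hm2 := ((hdfs j m).mp hanc).2
      exact (hdfs j k).mpr ⟨hjk, lt_trans hkm hm2⟩
    · intro h
      have hjk : j ≤ k := ((hdfs j k).mp h).1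
      exact le_of_lt (lt_of_lt_of_le hj2.2 (hSmono hjk))
  -- rewrite
  rw [hFexc]
  have hre : (∑ i, if Int.fract (x i - x (w z)) ≤ S k then p i else 0)
      = ∑ m, if y m ≤ S k then p (w m) else 0 :=
    (Fintype.sum_bijective w hw _ _ (fun m => rfl)).symm
  rw [hre]
  have hSk : S k = ∑ m, if m ≤ k then p (w m) else 0 := by
    show ∑ l ∈ Finset.Iic k, p (w l) = _
    rw [← Finset.sum_filter]
    apply Finset.sum_congr _ (fun _ _ => rfl)
    ext l; simp
  rw [Finset.sum_filter]
  have step : (∑ m, if y m ≤ S k then p (w m) else 0) - S k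
      = ∑ m, ((if y m ≤ S k then p (w m) else 0) - (if m ≤ k then p (w m) else 0)) := by
    rw [Finset.sum_sub_distrib]
    congr 1
  rw [step]
  apply Finset.sum_congr rfl
  intro m _
  by_cases hmk : m ≤ k
  · rw [if_pos (hle m hmk), if_pos hmk, if_neg (by
      rintro ⟨h1, -⟩; exact absurd hmk (not_le.mpr h1))]
    ring
  · push_neg at hmk
    rw [if_neg (not_le.mpr hmk), sub_zero]
    by_cases hc : y m ≤ S k
    · rw [if_pos hc, if_pos ⟨hmk, (hkey m hmk).mp hc, hnotanc m hmk⟩]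
    · rw [if_neg hc, if_neg (by
        rintro ⟨-, h2, -⟩; exact hc ((hkey m hmk).mpr h2))]
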